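/- Let d > 0 and consider the system for i = 1,2,3 with all d_i = d, L'_i = -2d, and L_{123} = d/4: -2d/x_i + (d/2)(x_j/(x_i x_k) + x_k/(x_i x_j) - x_i/(x_j x_k)) + 4d = 0 for {i,j,k} = {1,2,3}. Then x_1 = x_2 = x_3 = 3/8 is a solution, and it is the unique solution in (ℝ_{>0})³. -/

import Mathlib

/-- Ledger–Obata spaces (generalized Wallach spaces of type (3)): the unique
positive solution is `x₁ = x₂ = x₃ = 3/8`. -/
theorem ledger_obata_unique_solution (d : ℝ) (hd : 0 < d)
    (x₁ x₂ x₃ : ℝ) (hx₁ : 0 < x₁) (hx₂ : 0 < x₂) (hx₃ : 0 < x₃) :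
    (-2 * d / x₁ + (d / 2) * (x₂ / (x₁ * x₃) + x₃ / (x₁ * x₂) - x₁ / (x₂ * x₃)) +
        4 * d = 0 ∧
      -2 * d / x₂ + (d / 2) * (x₁ / (x₂ * x₃) + x₃ / (x₁ * x₂) - x₂ / (x₁ * x₃)) +
        4 * d = 0 ∧
      -2 * d / x₃ + (d / 2) * (x₁ / (x₂ * x₃) + x₂ / (x₁ * x₃) - x₃ / (x₁ * x₂)) +
        4 * d = 0) ↔
      (x₁ = 3 / 8 ∧ x₂ = 3 / 8 ∧ x₃ = 3 / 8) := by
  have h1n := hx₁.ne'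
  have h2n := hx₂.ne'
  have h3n := hx₃.ne'
  have hdn := hd.ne'
  constructor
  · rintro ⟨h1, h2, h3⟩
    field_simp at h1 h2 h3
    have e1 : -4*x₂*x₃ + x₂^2 + x₃^2 - x₁^2 + 8*x₁*x₂*x₃ = 0 := by
      have hne : d * (x₁^2 * x₂ * x₃) ≠ 0 := by positivity
      apply mul_left_cancel₀ hne
      linear_combination (x₁^2 * x₂ * x₃) * h1
    have e2 : -4*x₁*x₃ + x₁^2 + x₃^2 - x₂^2 + 8*x₁*x₂*x₃ = 0 := by
      have hne : d * (x₂^2 * x₁ * x₃) ≠ 0 := by positivity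
      apply mul_left_cancel₀ hne
      linear_combination (x₂^2 * x₁ * x₃) * h2
    have e3 : -4*x₁*x₂ + x₁^2 + x₂^2 - x₃^2 + 8*x₁*x₂*x₃ = 0 := by
      have hne : d * (x₃^2 * x₁ * x₂) ≠ 0 := by positivity
      apply mul_left_cancel₀ hne
      linear_combination (x₃^2 * x₁ * x₂) * h3
    have f12 : (x₂ - x₁) * (x₁ + x₂ - 2*x₃) = 0 := by linear_combination (e1 - e2) / 2
    have f13 : (x₃ - x₁) * (x₁ + x₃ - 2*x₂) = 0 := by linear_combination (e1 - e3) / 2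
    have f23 : (x₃ - x₂) * (x₂ + x₃ - 2*x₁) = 0 := by linear_combination (e2 - e3) / 2
    have heq : x₁ = x₂ ∧ x₁ = x₃ := by
      rcases mul_eq_zero.mp f12 with a12 | b12 <;>
      rcases mul_eq_zero.mp f13 with a13 | b13 <;>
      rcases mul_eq_zero.mp f23 with a23 | b23 <;>
      constructor <;> linarith
    obtain ⟨h12, h13⟩ := heq
    subst h12 h13
    have hx : 8 * x₁ - 3 = 0 := by
      have hne : x₁^2 ≠ 0 := by positivity
      apply mul_left_cancel₀ hne
      linear_combination e1
    refine ⟨by linarith, by linarith, by linarith⟩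
  · rintro ⟨rfl, rfl, rfl⟩
    norm_num
    ring
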